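/- Data constructivity of linear TGDs: let Σ be a set of linear TGDs, D and D' databases, and let 𝒞 be the class of Boolean CQs p over a query schema with D ∪ D' ∪ Σ ⊨ p. If q ∈ 𝒞 is prime with respect to 𝒞, then D ∪ Σ ⊨ q or D' ∪ Σ ⊨ q. -/

import Mathlib

set_option maxHeartbeats 1000000

/-- Terms: constants, nulls, and Skolem nulls `sk i v ts` determined by a
rule index `i`, an existential variable `v`, and the frontier terms `ts`. -/
inductive NTerm : Type where
  | const : ℕ → NTerm
  | null : ℕ → NTerm
  | sk : ℕ → ℕ → List NTerm → NTerm

/-- A fact: a relation symbol applied to a list of (ground) terms. -/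
structure DFact : Type where
  rel : ℕ
  args : List NTerm

/-- A (query or rule) atom: `Sum.inl v` is a variable, `Sum.inr c` a constant. -/
structure Atom : Type where
  rel : ℕ
  args : List (ℕ ⊕ ℕ)

/-- Apply a substitution (assignment of terms to variables) to an atom. -/
def applyAtom (h : ℕ → NTerm) (a : Atom) : DFact :=
  ⟨a.rel, a.args.map fun t => match t with
    | Sum.inl v => h v
    | Sum.inr c => NTerm.const c⟩

def mapDFact (g : NTerm → NTerm) (f : DFact) : DFact :=
  ⟨f.rel, f.args.map g⟩

/-- Active domain of an instance: all terms occurring in it. -/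
def adom (I : Set DFact) : Set NTerm := { t | ∃ f ∈ I, t ∈ f.args }

/-- A `C`-homomorphism from `I` to `J`: maps the facts of `I` into `J`
and fixes every constant in `C`. -/
def IsHom (C : Set ℕ) (g : NTerm → NTerm) (I J : Set DFact) : Prop :=
  (∀ f ∈ I, mapDFact g f ∈ J) ∧ ∀ c ∈ C, g (NTerm.const c) = NTerm.const c

/-- A Boolean conjunctive query: a finite conjunction of atoms,
all variables read existentially. -/
abbrev BCQ := List Atom

/-- `I ⊨ q`: some substitution maps the atoms of `q` into `I` (fixing constants). -/
def satCQ (I : Set DFact) (q : BCQ) : Prop :=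
  ∃ h : ℕ → NTerm, ∀ a ∈ q, applyAtom h a ∈ I

def cqConsts (q : BCQ) : Set ℕ := { c | ∃ a ∈ q, Sum.inr c ∈ a.args }

def cqVars (q : BCQ) : Set ℕ := { v | ∃ a ∈ q, Sum.inl v ∈ a.args }

/-- A database: a finite instance containing no nulls. -/
def IsDatabase (D : Set DFact) : Prop :=
  D.Finite ∧ ∀ f ∈ D, ∀ t ∈ f.args, ∃ c, t = NTerm.const c

def constsOf (I : Set DFact) : Set ℕ := { c | NTerm.const c ∈ adom I }

/-- A TGD `∀x∀y (body → ∃z head)`; existential variables are the head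
variables not occurring in the body. -/
structure TGD : Type where
  body : List Atom
  head : List Atom

def atomVars (a : Atom) : List ℕ :=
  a.args.filterMap fun t => match t with
    | Sum.inl v => some v
    | Sum.inr _ => none

def TGD.bodyVars (σ : TGD) : List ℕ :=
  σ.body.foldr (fun a r => atomVars a ++ r) []

def TGD.frontier (σ : TGD) : List ℕ :=
  ((σ.head.foldr (fun a r => atomVars a ++ r) []).filter (fun u => u ∈ σ.bodyVars))

/-- Extend `h` by sending each existential variable `v` of the `i`-th rule `σ`
to the Skolem null determined by `(i, h(frontier σ), v)`. -/
def skolemSub (i : ℕ) (σ : TGD) (h : ℕ → NTerm) : ℕ → NTerm := fun v =>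
  if v ∈ σ.bodyVars then h v
  else NTerm.sk i v (σ.frontier.map h)

/-- `I` is a model of the TGD `σ`. -/
def modelsTGD (I : Set DFact) (σ : TGD) : Prop :=
  ∀ h : ℕ → NTerm, (∀ a ∈ σ.body, applyAtom h a ∈ I) →
    ∃ h' : ℕ → NTerm, (∀ v ∈ σ.bodyVars, h' v = h v) ∧
      ∀ a ∈ σ.head, applyAtom h' a ∈ I

/-- `D ∪ Σ ⊨ q` for a Boolean CQ `q`. -/
def entailsCQ (Sg : List TGD) (D : Set DFact) (q : BCQ) : Prop :=
  ∀ I : Set DFact, D ⊆ I → (∀ σ ∈ Sg, modelsTGD I σ) → satCQ I q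

def cqAtoms (q : BCQ) : Set Atom := { a | a ∈ q }

/-- `q` is inseparable: it is not equivalent to the conjunction of two
nontrivial proper subqueries. -/
def CQInseparable (q : BCQ) : Prop :=
  ¬ ∃ q₁ q₂ : BCQ, q₁ ≠ [] ∧ q₂ ≠ [] ∧ cqAtoms q₁ ⊂ cqAtoms q ∧ cqAtoms q₂ ⊂ cqAtoms q ∧
      ∀ I : Set DFact, satCQ I q ↔ (satCQ I q₁ ∧ satCQ I q₂)

/-- Apply a partial variable-to-constant substitution to an atom. -/
def substVarAtom (s : ℕ → Option ℕ) (a : Atom) : Atom :=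
  ⟨a.rel, a.args.map fun t => match t with
    | Sum.inl v => (match s v with | some c => Sum.inr c | none => Sum.inl v)
    | t => t⟩

/-- `q` is most specific w.r.t. a class `𝒞` of BCQs. -/
def MostSpecific (𝒞 : Set BCQ) (q : BCQ) : Prop :=
  ∀ s : ℕ → Option ℕ, (∃ v ∈ cqVars q, (s v).isSome) → q.map (substVarAtom s) ∉ 𝒞

/-- `q` is prime w.r.t. `𝒞`: it belongs to `𝒞`, is inseparable and most specific. -/
def PrimeWrt (𝒞 : Set BCQ) (q : BCQ) : Prop :=
  q ∈ 𝒞 ∧ CQInseparable q ∧ MostSpecific 𝒞 q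

/-! ### Auxiliary development: Skolem chase for linear TGDs -/

open Classical in
/-- The Skolem chase of `D` under `Sg`, as an inductive predicate. -/
inductive ChaseP (Sg : List TGD) (D : Set DFact) : DFact → Prop where
  | base {f} : f ∈ D → ChaseP Sg D f
  | step (i : ℕ) (σ : TGD) (h : ℕ → NTerm) {a : Atom} :
      Sg[i]? = some σ → (∀ b ∈ σ.body, ChaseP Sg D (applyAtom h b)) →
      a ∈ σ.head → ChaseP Sg D (applyAtom (skolemSub i σ h) a)

lemma mem_atomVars {a : Atom} {v : ℕ} : v ∈ atomVars a ↔ Sum.inl v ∈ a.args := by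
  simp only [atomVars, List.mem_filterMap]
  constructor
  · rintro ⟨t, ht, he⟩
    cases t with
    | inl w => simp at he; subst he; exact ht
    | inr c => simp at he
  · intro hv; exact ⟨Sum.inl v, hv, rfl⟩

lemma mem_foldrVars {l : List Atom} {v : ℕ} :
    v ∈ l.foldr (fun a r => atomVars a ++ r) [] ↔ ∃ a ∈ l, v ∈ atomVars a := by
  induction l with
  | nil => simp
  | cons b t ih => simp [ih]

lemma mem_frontier_iff {σ : TGD} {v : ℕ} :
    v ∈ σ.frontier ↔ (∃ a ∈ σ.head, v ∈ atomVars a) ∧ v ∈ σ.bodyVars := by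
  simp [TGD.frontier, List.mem_filter, mem_foldrVars]
  aesop

lemma mem_bodyVars_iff {σ : TGD} {v : ℕ} :
    v ∈ σ.bodyVars ↔ ∃ b ∈ σ.body, v ∈ atomVars b := mem_foldrVars

lemma applyAtom_congr {h₁ h₂ : ℕ → NTerm} {a : Atom}
    (h : ∀ v, Sum.inl v ∈ a.args → h₁ v = h₂ v) : applyAtom h₁ a = applyAtom h₂ a := by
  unfold applyAtom
  congr 1
  apply List.map_congr_left
  intro t ht
  cases t with
  | inl v => exact h v ht
  | inr c => rfl

lemma mapDFact_applyAtom {g : NTerm → NTerm} (hg : ∀ c, g (NTerm.const c) = NTerm.const c)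
    (h : ℕ → NTerm) (a : Atom) : mapDFact g (applyAtom h a) = applyAtom (g ∘ h) a := by
  unfold mapDFact applyAtom
  simp only [List.map_map]
  congr 1
  apply List.map_congr_left
  intro t _
  cases t with
  | inl v => rfl
  | inr c => exact hg c

open Classical in
/-- Choice of an extension witness in `K` for rule index `i`, existential `u`,
frontier values `ts`. -/
noncomputable def extW (Sg : List TGD) (K : Set DFact) (i u : ℕ) (ts : List NTerm) : NTerm :=
  if H : ∃ h' : ℕ → NTerm, ∃ σ, Sg[i]? = some σ ∧ (∀ a ∈ σ.head, applyAtom h' a ∈ K) ∧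
      ∃ h0, (∀ b ∈ σ.body, applyAtom h0 b ∈ K) ∧ σ.frontier.map h0 = ts ∧
        (∀ v ∈ σ.bodyVars, h' v = h0 v)
  then H.choose u else NTerm.const 0

lemma extW_pos {Sg : List TGD} {K : Set DFact} {i u : ℕ} {ts : List NTerm}
    (H : ∃ h' : ℕ → NTerm, ∃ σ, Sg[i]? = some σ ∧ (∀ a ∈ σ.head, applyAtom h' a ∈ K) ∧
      ∃ h0, (∀ b ∈ σ.body, applyAtom h0 b ∈ K) ∧ σ.frontier.map h0 = ts ∧
        (∀ v ∈ σ.bodyVars, h' v = h0 v)) :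
    extW Sg K i u ts = H.choose u := dif_pos H

/-- Canonical homomorphism from any chase into a model `K`. -/
noncomputable def chaseHom (Sg : List TGD) (K : Set DFact) : NTerm → NTerm
  | .const c => .const c
  | .null n => .null n
  | .sk i u ts => extW Sg K i u (ts.attach.map (fun x => chaseHom Sg K x.1))
  decreasing_by
    have := List.sizeOf_lt_of_mem x.2
    simp only [NTerm.sk.sizeOf_spec]
    omega

lemma chaseHom_sk (Sg : List TGD) (K : Set DFact) (i u : ℕ) (ts : List NTerm) :
    chaseHom Sg K (.sk i u ts) = extW Sg K i u (ts.map (chaseHom Sg K)) := by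
  rw [chaseHom]
  congr 1
  simp [List.attach_map_val]

/-- Universality of the chase: `chaseHom` maps the chase of `D` into any model
`K ⊇ D` of `Sg`, fixing all constants. -/
lemma chaseHom_mem {Sg : List TGD} {K D : Set DFact}
    (hDdb : ∀ f ∈ D, ∀ t ∈ f.args, ∃ c, t = NTerm.const c)
    (hDK : D ⊆ K) (hmod : ∀ σ ∈ Sg, modelsTGD K σ) :
    ∀ f, ChaseP Sg D f → mapDFact (chaseHom Sg K) f ∈ K := by
  set g := chaseHom Sg K with hgdef
  have hgc : ∀ c, g (NTerm.const c) = NTerm.const c := fun c => by rw [hgdef, chaseHom]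
  intro f hf
  induction hf with
  | @base f hfD =>
      have heq : mapDFact g f = f := by
        obtain ⟨r, args⟩ := f
        unfold mapDFact
        simp only [DFact.mk.injEq, true_and]
        have : args.map g = args.map id := List.map_congr_left (fun t ht => by
          obtain ⟨c, rfl⟩ := hDdb _ hfD t ht
          exact hgc c)
        rw [this, List.map_id]
      rw [heq]; exact hDK hfD
  | @step i σ h a hget hbody ha ih =>
      have hσ : σ ∈ Sg := List.mem_of_getElem? hget
      have hbK : ∀ b ∈ σ.body, applyAtom (g ∘ h) b ∈ K := by
        intro b hb
        have := ih b hb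
        rwa [mapDFact_applyAtom hgc] at this
      obtain ⟨h', hagree, hhead⟩ := hmod σ hσ (g ∘ h) hbK
      have H : ∃ h' : ℕ → NTerm, ∃ σ', Sg[i]? = some σ' ∧
          (∀ a ∈ σ'.head, applyAtom h' a ∈ K) ∧
          ∃ h0, (∀ b ∈ σ'.body, applyAtom h0 b ∈ K) ∧
            σ'.frontier.map h0 = σ.frontier.map (g ∘ h) ∧
            (∀ v ∈ σ'.bodyVars, h' v = h0 v) :=
        ⟨h', σ, hget, hhead, g ∘ h, hbK, rfl, hagree⟩
      obtain ⟨σc, hgetc, hheadc, h0c, hbodyc, hfrc, hagreec⟩ := H.choose_spec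
      have hσc : σ = σc := by rw [hget] at hgetc; exact Option.some_injective _ hgetc
      subst hσc
      have hkey : mapDFact g (applyAtom (skolemSub i σ h) a) = applyAtom H.choose a := by
        rw [mapDFact_applyAtom hgc]
        apply applyAtom_congr
        intro v hv
        have hva : v ∈ atomVars a := mem_atomVars.mpr hv
        show g (skolemSub i σ h v) = H.choose v
        by_cases hvb : v ∈ σ.bodyVars
        · have hvf : v ∈ σ.frontier := mem_frontier_iff.mpr ⟨⟨a, ha, hva⟩, hvb⟩
          rw [skolemSub, if_pos hvb, hagreec v hvb]
          exact (List.map_inj_left.mp hfrc v hvf).symm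
        · rw [skolemSub, if_neg hvb]
          show chaseHom Sg K (NTerm.sk i v (σ.frontier.map h)) = H.choose v
          rw [chaseHom_sk, List.map_map]
          exact extW_pos H
      rw [hkey]
      exact hheadc a ha

/-- Structure lemma: every Skolem term in the chase of a database was created
by a chase step with matching frontier. -/
lemma chase_struct {Sg : List TGD} {D : Set DFact}
    (hDdb : ∀ f ∈ D, ∀ t ∈ f.args, ∃ c, t = NTerm.const c) :
    ∀ f, ChaseP Sg D f → ∀ i u ts, NTerm.sk i u ts ∈ f.args →
      ∃ σ h, Sg[i]? = some σ ∧ (∀ b ∈ σ.body, ChaseP Sg D (applyAtom h b)) ∧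
        σ.frontier.map h = ts := by
  intro f hf
  induction hf with
  | base hfD =>
      intro i u ts hts
      obtain ⟨c, hc⟩ := hDdb _ hfD _ hts
      simp at hc
  | step i' σ' h hget hbody ha ih =>
      intro i u ts hts
      simp only [applyAtom, List.mem_map] at hts
      obtain ⟨t, ht, he⟩ := hts
      cases t with
      | inr c => simp at he
      | inl v =>
        simp only at he
        by_cases hvb : v ∈ σ'.bodyVars
        · rw [skolemSub, if_pos hvb] at he
          obtain ⟨b, hb, hvb'⟩ := mem_bodyVars_iff.mp hvb
          have : NTerm.sk i u ts ∈ (applyAtom h b).args := by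
            simp only [applyAtom, List.mem_map]
            exact ⟨Sum.inl v, mem_atomVars.mp hvb', he⟩
          exact ih b hb i u ts this
        · rw [skolemSub, if_neg hvb] at he
          injection he with h1 h2 h3
          subst h1; subst h3
          exact ⟨σ', h, hget, hbody, rfl⟩

/-- Key disjointness lemma for linear TGDs: a fact in the chase of `D'` that is
not in the chase of `D` contains no non-constant term of the chase of `D`. -/
lemma chase_disjoint {Sg : List TGD} {D D' : Set DFact}
    (hlin : ∀ σ ∈ Sg, σ.body.length = 1)
    (hDdb : ∀ f ∈ D, ∀ t ∈ f.args, ∃ c, t = NTerm.const c)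
    (hD'db : ∀ f ∈ D', ∀ t ∈ f.args, ∃ c, t = NTerm.const c) :
    ∀ f, ChaseP Sg D' f → ¬ ChaseP Sg D f → ∀ t ∈ f.args, (∀ c, t ≠ NTerm.const c) →
      ¬ ∃ f', ChaseP Sg D f' ∧ t ∈ f'.args := by
  intro f hf
  induction hf with
  | base hfD =>
      intro _ t ht htc _
      obtain ⟨c, rfl⟩ := hD'db _ hfD _ ht
      exact htc c rfl
  | @step i σ h a hget hbody ha ih =>
      intro hnotD t ht htc hex
      obtain ⟨f', hf', htf'⟩ := hex
      simp only [applyAtom, List.mem_map] at ht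
      obtain ⟨w, hw, he⟩ := ht
      cases w with
      | inr c => simp only at he; exact htc c he.symm
      | inl v =>
        simp only at he
        by_cases hvb : v ∈ σ.bodyVars
        · -- t = h v occurs in a body (parent) fact
          rw [skolemSub, if_pos hvb] at he
          obtain ⟨b, hb, hvb'⟩ := mem_bodyVars_iff.mp hvb
          by_cases hp : ChaseP Sg D (applyAtom h b)
          · -- parent in chase of D, so by linearity f is too: contradiction
            apply hnotD
            refine ChaseP.step i σ h hget ?_ ha
            intro b' hb'
            have hσ : σ ∈ Sg := List.mem_of_getElem? hget
            have hlen := hlin σ hσ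
            have : b' = b := by
              obtain ⟨x, hx⟩ := List.length_eq_one_iff.mp hlen
              rw [hx] at hb hb'
              simp at hb hb'
              rw [hb, hb']
            rw [this]; exact hp
          · exact ih b hb hp t (by
              simp only [applyAtom, List.mem_map]
              exact ⟨Sum.inl v, mem_atomVars.mp hvb', he⟩) htc ⟨f', hf', htf'⟩
        · -- t is a Skolem term created here; use the structure lemma on the D-side
          rw [skolemSub, if_neg hvb] at he
          subst he
          obtain ⟨σ₂, h₂, hget₂, hbody₂, hfr₂⟩ := chase_struct hDdb f' hf' _ _ _ htf'
          have hσ₂ : σ = σ₂ := by rw [hget] at hget₂; exact Option.some_injective _ hget₂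
          subst hσ₂
          apply hnotD
          have : applyAtom (skolemSub i σ h) a = applyAtom (skolemSub i σ h₂) a := by
            apply applyAtom_congr
            intro u hu
            have hua : u ∈ atomVars a := mem_atomVars.mpr hu
            by_cases hub : u ∈ σ.bodyVars
            · have huf : u ∈ σ.frontier := mem_frontier_iff.mpr ⟨⟨a, ha, hua⟩, hub⟩
              rw [skolemSub, skolemSub, if_pos hub, if_pos hub]
              exact (List.map_inj_left.mp hfr₂.symm u huf)
            · rw [skolemSub, skolemSub, if_neg hub, if_neg hub, hfr₂]
          rw [this]
          exact ChaseP.step i σ h₂ hget hbody₂ ha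

lemma applyAtom_subst {g' : ℕ → NTerm} {s : ℕ → Option ℕ} {a : Atom}
    (hsg : ∀ w c, s w = some c → g' w = NTerm.const c) :
    applyAtom g' (substVarAtom s a) = applyAtom g' a := by
  unfold applyAtom substVarAtom
  simp only [List.map_map]
  congr 1
  apply List.map_congr_left
  intro t _
  cases t with
  | inr c => rfl
  | inl w =>
    simp only [Function.comp_apply]
    cases hsw : s w with
    | none => simp [hsw]
    | some c => simp only [hsw]; exact (hsg w c hsw).symm

lemma mem_applyAtom_args {h : ℕ → NTerm} {a : Atom} {v : ℕ} (hv : Sum.inl v ∈ a.args) :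
    h v ∈ (applyAtom h a).args := by
  simp only [applyAtom, List.mem_map]
  exact ⟨Sum.inl v, hv, rfl⟩


/-- data constructivity of linear TGDs: a BCQ prime w.r.t. the
class of BCQs entailed by `D ∪ D'` together with `Σ` is entailed by `D` with
`Σ` or by `D'` with `Σ`. -/
theorem linear_data_constructivity (Sg : List TGD)
    (hlin : ∀ σ ∈ Sg, σ.body.length = 1) (D D' : Set DFact)
    (hD : IsDatabase D) (hD' : IsDatabase D') (q : BCQ)
    (hq : PrimeWrt { p : BCQ | entailsCQ Sg (D ∪ D') p } q) :
    entailsCQ Sg D q ∨ entailsCQ Sg D' q := by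
  classical
  obtain ⟨hqC, hinsep, hms⟩ := hq
  simp only [Set.mem_setOf_eq] at hqC
  have hDdb : ∀ f ∈ D, ∀ t ∈ f.args, ∃ c, t = NTerm.const c := hD.2
  have hD'db : ∀ f ∈ D', ∀ t ∈ f.args, ∃ c, t = NTerm.const c := hD'.2
  set C1 : Set DFact := {f | ChaseP Sg D f} with hC1
  set C2 : Set DFact := {f | ChaseP Sg D' f} with hC2
  have hJmod : ∀ σ ∈ Sg, modelsTGD (C1 ∪ C2) σ := by
    intro σ hσ h hbody
    obtain ⟨i, hget⟩ := List.mem_iff_getElem?.mp hσ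
    obtain ⟨b, hb⟩ := List.length_eq_one_iff.mp (hlin σ hσ)
    refine ⟨skolemSub i σ h, fun v hv => by rw [skolemSub, if_pos hv], ?_⟩
    have hbJ : applyAtom h b ∈ C1 ∪ C2 := hbody b (by rw [hb]; simp)
    intro a ha
    rcases hbJ with h1 | h1
    · exact Or.inl (ChaseP.step i σ h hget
        (fun b' hb' => by rw [hb] at hb'; simp at hb'; subst hb'; exact h1) ha)
    · exact Or.inr (ChaseP.step i σ h hget
        (fun b' hb' => by rw [hb] at hb'; simp at hb'; subst hb'; exact h1) ha)
  have hsub : D ∪ D' ⊆ C1 ∪ C2 := by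
    rintro f (hf | hf)
    exacts [Or.inl (ChaseP.base hf), Or.inr (ChaseP.base hf)]
  obtain ⟨h, hh⟩ := hqC (C1 ∪ C2) hsub hJmod
  have hgc : ∀ (K : Set DFact) (c : ℕ), chaseHom Sg K (NTerm.const c) = NTerm.const c :=
    fun K c => by rw [chaseHom]
  -- Step I: no query variable is mapped to a constant by h
  have hnc : ∀ v ∈ cqVars q, ∀ c, h v ≠ NTerm.const c := by
    by_contra hcon
    push_neg at hcon
    obtain ⟨v, hv, c, hc⟩ := hcon
    set s : ℕ → Option ℕ :=
      fun w => if Hw : ∃ c, h w = NTerm.const c then some Hw.choose else none with hs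
    have hsome : (s v).isSome := by
      simp only [hs]; rw [dif_pos ⟨c, hc⟩]; rfl
    apply hms s ⟨v, hv, hsome⟩
    show entailsCQ Sg (D ∪ D') (q.map (substVarAtom s))
    intro K hK hKmod
    refine ⟨chaseHom Sg K ∘ h, ?_⟩
    intro a' ha'
    obtain ⟨a, ha, rfl⟩ := List.mem_map.mp ha'
    have hmem : applyAtom (chaseHom Sg K ∘ h) a ∈ K := by
      rcases hh a ha with h1 | h1
      · have := chaseHom_mem hDdb (fun f hf => hK (Or.inl hf)) hKmod _ h1
        rwa [mapDFact_applyAtom (hgc K)] at this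
      · have := chaseHom_mem hD'db (fun f hf => hK (Or.inr hf)) hKmod _ h1
        rwa [mapDFact_applyAtom (hgc K)] at this
    have heq : applyAtom (chaseHom Sg K ∘ h) (substVarAtom s a)
        = applyAtom (chaseHom Sg K ∘ h) a := by
      apply applyAtom_subst
      intro w c' hw
      simp only [hs] at hw
      by_cases Hw : ∃ c, h w = NTerm.const c
      · rw [dif_pos Hw] at hw
        have hc' : Hw.choose = c' := by injection hw
        have := Hw.choose_spec
        rw [hc'] at this
        show chaseHom Sg K (h w) = NTerm.const c'
        rw [this, hgc]
      · rw [dif_neg Hw] at hw; exact absurd hw (by simp)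
    rw [heq]; exact hmem
  -- Case analysis
  by_cases hcase1 : ∀ a ∈ q, applyAtom h a ∈ C1
  · left
    intro K hK hKmod
    refine ⟨chaseHom Sg K ∘ h, fun a ha => ?_⟩
    have := chaseHom_mem hDdb hK hKmod _ (hcase1 a ha)
    rwa [mapDFact_applyAtom (hgc K)] at this
  by_cases hcase2 : ∀ a ∈ q, applyAtom h a ∉ C1
  · right
    intro K hK hKmod
    refine ⟨chaseHom Sg K ∘ h, fun a ha => ?_⟩
    have h2 : applyAtom h a ∈ C2 := (hh a ha).resolve_left (hcase2 a ha)
    have := chaseHom_mem hD'db hK hKmod _ h2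
    rwa [mapDFact_applyAtom (hgc K)] at this
  -- Both parts nonempty: contradict inseparability
  exfalso
  push_neg at hcase1 hcase2
  obtain ⟨a2, ha2q, ha2⟩ := hcase1
  obtain ⟨a1, ha1q, ha1⟩ := hcase2
  set p : Atom → Prop := fun a => applyAtom h a ∈ C1 with hp
  set q1 : BCQ := q.filter (fun a => decide (p a)) with hq1
  set q2 : BCQ := q.filter (fun a => !decide (p a)) with hq2
  have hm1 : ∀ a, a ∈ q1 ↔ a ∈ q ∧ p a := by
    intro a; simp [hq1, List.mem_filter]
  have hm2 : ∀ a, a ∈ q2 ↔ a ∈ q ∧ ¬ p a := by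
    intro a; simp [hq2, List.mem_filter]
  apply hinsep
  refine ⟨q1, q2, List.ne_nil_of_mem ((hm1 a1).mpr ⟨ha1q, ha1⟩),
    List.ne_nil_of_mem ((hm2 a2).mpr ⟨ha2q, ha2⟩), ?_, ?_, ?_⟩
  · rw [Set.ssubset_def]
    constructor
    · intro a haa; exact ((hm1 a).mp haa).1
    · intro hsup
      exact ha2 ((hm1 a2).mp (hsup ha2q)).2
  · rw [Set.ssubset_def]
    constructor
    · intro a haa; exact ((hm2 a).mp haa).1
    · intro hsup
      exact ((hm2 a1).mp (hsup ha1q)).2 ha1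
  · intro I
    constructor
    · rintro ⟨h0, hh0⟩
      exact ⟨⟨h0, fun a ha => hh0 a ((hm1 a).mp ha).1⟩,
             ⟨h0, fun a ha => hh0 a ((hm2 a).mp ha).1⟩⟩
    · rintro ⟨⟨h1, hh1⟩, ⟨h2, hh2⟩⟩
      have hdisj : ∀ v, v ∈ cqVars q1 → v ∈ cqVars q2 → False := by
        intro v hv1 hv2
        obtain ⟨b1, hb1, hvb1⟩ := hv1
        obtain ⟨b2, hb2, hvb2⟩ := hv2
        have hb1q := (hm1 b1).mp hb1
        have hb2q := (hm2 b2).mp hb2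
        have hf2 : applyAtom h b2 ∈ C2 := (hh b2 hb2q.1).resolve_left hb2q.2
        exact chase_disjoint hlin hDdb hD'db _ hf2 hb2q.2 (h v)
          (mem_applyAtom_args hvb2) (hnc v ⟨b2, hb2q.1, hvb2⟩)
          ⟨applyAtom h b1, hb1q.2, mem_applyAtom_args hvb1⟩
      refine ⟨fun v => if v ∈ cqVars q1 then h1 v else h2 v, ?_⟩
      intro a haq
      by_cases hpa : p a
      · have haf : a ∈ q1 := (hm1 a).mpr ⟨haq, hpa⟩
        have heq : applyAtom (fun v => if v ∈ cqVars q1 then h1 v else h2 v) a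
            = applyAtom h1 a :=
          applyAtom_congr (fun v hv => if_pos ⟨a, haf, hv⟩)
        rw [heq]; exact hh1 a haf
      · have haf : a ∈ q2 := (hm2 a).mpr ⟨haq, hpa⟩
        have heq : applyAtom (fun v => if v ∈ cqVars q1 then h1 v else h2 v) a
            = applyAtom h2 a :=
          applyAtom_congr (fun v hv => if_neg (fun hmem => hdisj v hmem ⟨a, haf, hv⟩))
        rw [heq]; exact hh2 a haf
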